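/- arXiv:1802.09555 — 4 statements merged into one kernel-verified Lean document; each statement's English description precedes it below -/
import Mathlib

section
/- For every involutive functor (F, ν) : (C, J, j) → (C′, J′, j′), the natural transformation ν : FJ → J′F is a natural isomorphism. -/
open CategoryTheory CategoryTheory.Limits MonoidalCategory

universe w w2 v u v2 u2

/-- An involutive category: a category `C` with an endofunctor `J` and a natural
isomorphism `j : 𝟭 C ≅ J ⋙ J` satisfying `jJ = Jj`. -/
structure InvCat (C : Type u) [Category.{v} C] where
  J : C ⥤ C
  j : 𝟭 C ≅ J ⋙ J
  coh : ∀ c : C, j.hom.app (J.obj c) = J.map (j.hom.app c)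

/-- For every involutive functor `(F, ν) : (C, J, j) → (C′, J′, j′)`, the natural
transformation `ν : FJ → J′F` is a natural isomorphism. -/
theorem involutiveFunctor_nu_isIso {C : Type u} {D : Type u2} [Category.{v} C] [Category.{v2} D]
    (I : InvCat C) (I' : InvCat D) (F : C ⥤ D) (ν : I.J ⋙ F ⟶ F ⋙ I'.J)
    (hν : ∀ c : C,
      F.map (I.j.hom.app c) ≫ ν.app (I.J.obj c) ≫ I'.J.map (ν.app c) = I'.j.hom.app (F.obj c)) :
    IsIso ν := by
  -- ν at `J c` is a split mono, for every `c`
  have smono : ∀ c : C, IsSplitMono (ν.app (I.J.obj c)) := by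
    intro c
    refine ⟨⟨⟨I'.J.map (ν.app c) ≫ I'.j.inv.app (F.obj c) ≫ F.map (I.j.hom.app c), ?_⟩⟩⟩
    have key : ν.app (I.J.obj c) ≫ I'.J.map (ν.app c)
        = inv (F.map (I.j.hom.app c)) ≫ I'.j.hom.app (F.obj c) := by
      rw [IsIso.eq_inv_comp, ← Category.assoc, ← hν c, Category.assoc]
    rw [← Category.assoc, ← Category.assoc, key]
    simp
  -- ν at any `c` is a split epi
  have sepi : ∀ c : C, IsSplitEpi (ν.app c) := by
    intro c
    refine ⟨⟨⟨I'.J.map (F.map (I.j.hom.app c)) ≫ I'.J.map (ν.app (I.J.obj c)) ≫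
      I'.j.inv.app (F.obj (I.J.obj c)), ?_⟩⟩⟩
    have hinvnat := I'.j.inv.naturality (ν.app c)
    dsimp at hinvnat
    have hJ : I'.J.map (F.map (I.j.hom.app c)) ≫ I'.J.map (ν.app (I.J.obj c)) ≫
        I'.J.map (I'.J.map (ν.app c)) = I'.j.hom.app (I'.J.obj (F.obj c)) := by
      rw [I'.coh, ← hν c]
      simp [Functor.map_comp]
    calc (I'.J.map (F.map (I.j.hom.app c)) ≫ I'.J.map (ν.app (I.J.obj c)) ≫
          I'.j.inv.app (F.obj (I.J.obj c))) ≫ ν.app c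
        = I'.J.map (F.map (I.j.hom.app c)) ≫ I'.J.map (ν.app (I.J.obj c)) ≫
          I'.J.map (I'.J.map (ν.app c)) ≫ I'.j.inv.app (I'.J.obj (F.obj c)) := by
          simp only [Category.assoc]
          rw [← hinvnat]
      _ = I'.j.hom.app (I'.J.obj (F.obj c)) ≫ I'.j.inv.app (I'.J.obj (F.obj c)) := by
          rw [← hJ]; simp only [Category.assoc]
      _ = 𝟙 _ := by simp
  -- ν at any `c` is mono, by conjugating with `j`
  have hmono : ∀ c : C, Mono (ν.app c) := by
    intro c
    have hnat := ν.naturality (I.j.hom.app c)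
    dsimp at hnat
    have : Mono (ν.app c ≫ I'.J.map (F.map (I.j.hom.app c))) := by
      rw [← hnat]
      have : Mono (ν.app (I.J.obj (I.J.obj c))) := (smono (I.J.obj c)).mono
      exact mono_comp _ _
    exact mono_of_mono (ν.app c) (I'.J.map (F.map (I.j.hom.app c)))
  have : ∀ c : C, IsIso (ν.app c) := by
    intro c
    have := hmono c
    have := sepi c
    exact isIso_of_mono_of_isSplitEpi _
  exact NatIso.isIso_of_isIso_app ν
end

section
/- Let (R, ρ) : (D, K, k) → (C, J, j) be an involutive functor and suppose L : C → D is left adjoint to R with unit η and counit ε. Define λ : LJ → KL as the composite λ = (εKL) ∘ (Lρ⁻¹L) ∘ (LJη). Then (L, λ) is an involutive functor and the adjunction L ⊣ R is an involutive adjunction, i.e., η and ε are involutive natural transformations. -/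
open CategoryTheory CategoryTheory.Limits MonoidalCategory

universe w w2 v u v2 u2

/-- Given an involutive functor `(R, ρ) : (D, K, k) → (C, J, j)` and a left adjoint
`L ⊣ R` with unit `η` and counit `ε`, the natural transformation
`λ = (εKL) ∘ (Lρ⁻¹L) ∘ (LJη) : LJ → KL` makes `(L, λ)` an involutive functor, and the
adjunction `L ⊣ R` becomes an involutive adjunction: `η` and `ε` are involutive
natural transformations. (Note `ρ` is automatically invertible.) -/
theorem involutive_adjunction {C : Type u} {D : Type u2} [Category.{v} C] [Category.{v2} D]
    (IC : InvCat C) (ID : InvCat D) (R : D ⥤ C) (ρ : ID.J ⋙ R ⟶ R ⋙ IC.J)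
    (hρ : ∀ d : D,
      R.map (ID.j.hom.app d) ≫ ρ.app (ID.J.obj d) ≫ IC.J.map (ρ.app d) = IC.j.hom.app (R.obj d))
    [IsIso ρ] (L : C ⥤ D) (adj : L ⊣ R) :
    ∃ lam : IC.J ⋙ L ⟶ L ⋙ ID.J,
      (∀ c : C, lam.app c =
          L.map (IC.J.map (adj.unit.app c)) ≫ L.map ((inv ρ).app (L.obj c)) ≫
            adj.counit.app (ID.J.obj (L.obj c))) ∧
      -- (L, λ) is an involutive functor
      (∀ c : C,
        L.map (IC.j.hom.app c) ≫ lam.app (IC.J.obj c) ≫ ID.J.map (lam.app c) =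
          ID.j.hom.app (L.obj c)) ∧
      -- the unit η is an involutive natural transformation
      (∀ c : C,
        IC.J.map (adj.unit.app c) =
          adj.unit.app (IC.J.obj c) ≫ R.map (lam.app c) ≫ ρ.app (L.obj c)) ∧
      -- the counit ε is an involutive natural transformation
      (∀ d : D,
        L.map (ρ.app d) ≫ lam.app (R.obj d) ≫ ID.J.map (adj.counit.app d) =
          adj.counit.app (ID.J.obj d)) := by
  have hinv : ∀ d : D, (inv ρ).app d ≫ ρ.app d = 𝟙 _ := fun d => by
    simpa only [NatTrans.comp_app, NatTrans.id_app] using congr_arg (fun t : (R ⋙ IC.J ⟶ R ⋙ IC.J) => t.app d) (IsIso.inv_hom_id ρ)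
  have hinv' : ∀ d : D, ρ.app d ≫ (inv ρ).app d = 𝟙 _ := fun d => by
    simpa only [NatTrans.comp_app, NatTrans.id_app] using congr_arg (fun t : (ID.J ⋙ R ⟶ ID.J ⋙ R) => t.app d) (IsIso.hom_inv_id ρ)
  have hnat : ∀ {d d' : D} (u : d ⟶ d'),
      IC.J.map (R.map u) ≫ (inv ρ).app d' = (inv ρ).app d ≫ R.map (ID.J.map u) :=
    fun u => (inv ρ).naturality u
  let lap : ∀ c : C, L.obj (IC.J.obj c) ⟶ ID.J.obj (L.obj c) := fun c =>
    (adj.homEquiv _ _).symm (IC.J.map (adj.unit.app c) ≫ (inv ρ).app (L.obj c))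
  -- transpose of `lap`
  have hφ : ∀ c : C, adj.unit.app (IC.J.obj c) ≫ R.map (lap c)
      = IC.J.map (adj.unit.app c) ≫ (inv ρ).app (L.obj c) := fun c => by
    have h := (adj.homEquiv (IC.J.obj c) (ID.J.obj (L.obj c))).apply_symm_apply
      (IC.J.map (adj.unit.app c) ≫ (inv ρ).app (L.obj c))
    rwa [Adjunction.homEquiv_unit] at h
  have hnatural : ∀ {c c' : C} (u : c ⟶ c'),
      (IC.J ⋙ L).map u ≫ lap c' = lap c ≫ (L ⋙ ID.J).map u := by
    intro c c' u
    apply (adj.homEquiv _ _).injective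
    simp only [Functor.comp_map]
    rw [Adjunction.homEquiv_naturality_left, Adjunction.homEquiv_naturality_right]
    simp only [lap, Equiv.apply_symm_apply, Category.assoc]
    rw [← hnat (L.map u)]
    have h := adj.unit.naturality u
    simp only [Functor.id_map, Functor.comp_map] at h
    rw [← Functor.map_comp_assoc, ← Functor.map_comp_assoc, ← h]
  -- involutivity of `lam`
  have invol : ∀ c : C,
      L.map (IC.j.hom.app c) ≫ lap (IC.J.obj c) ≫ ID.J.map (lap c) = ID.j.hom.app (L.obj c) := by
    intro c
    apply (adj.homEquiv _ _).injective
    rw [Adjunction.homEquiv_naturality_left, Adjunction.homEquiv_naturality_right,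
      Adjunction.homEquiv_unit, Adjunction.homEquiv_unit]
    simp only [Functor.comp_obj, Functor.id_obj]
    rw [hφ (IC.J.obj c), Category.assoc, ← hnat (lap c),
      ← Category.assoc (IC.J.map _), ← Functor.map_comp, hφ c, Functor.map_comp]
    have hj := IC.j.hom.naturality (adj.unit.app c)
    simp only [Functor.id_map, Functor.comp_map, Functor.id_obj, Functor.comp_obj] at hj
    simp only [Category.assoc]
    rw [← reassoc_of% hj, ← hρ (L.obj c)]
    simp only [Category.assoc]
    rw [← Functor.map_comp_assoc IC.J (ρ.app (L.obj c)), hinv']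
    simp [hinv']
  -- unit is involutive
  have hunit : ∀ c : C, IC.J.map (adj.unit.app c)
      = adj.unit.app (IC.J.obj c) ≫ R.map (lap c) ≫ ρ.app (L.obj c) := by
    intro c
    rw [← Category.assoc, hφ c, Category.assoc, hinv]
    exact (Category.comp_id _).symm
  -- counit is involutive
  have hcounit : ∀ d : D,
      L.map (ρ.app d) ≫ lap (R.obj d) ≫ ID.J.map (adj.counit.app d)
        = adj.counit.app (ID.J.obj d) := by
    intro d
    apply (adj.homEquiv _ _).injective
    rw [Adjunction.homEquiv_naturality_left, Adjunction.homEquiv_naturality_right,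
      Adjunction.homEquiv_unit, Adjunction.homEquiv_unit]
    simp only [Functor.comp_obj, Functor.id_obj]
    have h2 := hnat (adj.counit.app d)
    simp only [Functor.comp_obj, Functor.id_obj] at h2
    rw [hφ (R.obj d), Category.assoc, ← h2,
      ← Functor.map_comp_assoc, adj.right_triangle_components]
    simp [hinv']
  exact ⟨⟨lap, fun u v => hnatural⟩, fun c => by
      simp [lap, Adjunction.homEquiv_counit], invol, hunit, hcounit⟩
end

section
/- The involutive symmetric monoidal category (Σ_𝔠, Rev, id) of 𝔠-profiles with order-reversal as involutive structure is isomorphic, as an involutive symmetric monoidal category, to the trivial involutive symmetric monoidal category (Σ_𝔠, Id, id). The isomorphism is induced by the section ρ sending a profile c = (c₁,…,cₙ) to the ∗-object given by the order-reversal permutation ρₙ : c → cρₙ. -/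
open CategoryTheory MonoidalCategory

universe w v u

/-- The groupoid `Σ_𝔠` of `𝔠`-profiles: objects are finite sequences in `𝔠` (encoded as
`⟨n, f : Fin n → 𝔠⟩`) and morphisms are right permutations `σ : c → cσ`. -/
def Profile (S : Type w) : Type w := Σ n : ℕ, Fin n → S

/-- A morphism of profiles `a ⟶ b` is a permutation `σ` with `b = aσ`. -/
@[ext]
structure ProfileHom {S : Type w} (a b : Profile S) where
  σ : Fin b.1 ≃ Fin a.1
  comm : a.2 ∘ σ = b.2

instance (S : Type w) : Category (Profile S) where
  Hom := ProfileHom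
  id a := ⟨Equiv.refl _, rfl⟩
  comp f g :=
    ⟨g.σ.trans f.σ, by
      funext x
      exact (congrFun f.comm (g.σ x)).trans (congrFun g.comm x)⟩
  id_comp f := ProfileHom.ext (Equiv.trans_refl f.σ)
  comp_id f := ProfileHom.ext (Equiv.refl_trans f.σ)
  assoc f g h := ProfileHom.ext (Equiv.trans_assoc h.σ g.σ f.σ).symm

@[simp] lemma Profile.id_σ {S : Type w} (a : Profile S) :
    (𝟙 a : a ⟶ a).σ = Equiv.refl _ := rfl

@[simp] lemma Profile.comp_σ {S : Type w} {a b c : Profile S} (f : a ⟶ b) (g : b ⟶ c) :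
    (f ≫ g).σ = g.σ.trans f.σ := rfl

/-- Concatenation of profiles (the tensor product of `Σ_𝔠`). -/
def ptensor {S : Type w} (a b : Profile S) : Profile S :=
  ⟨a.1 + b.1, Fin.append a.2 b.2⟩

/-- Concatenation of morphisms of profiles. -/
def ptensorHom {S : Type w} {a a' b b' : Profile S} (f : a ⟶ a') (g : b ⟶ b') :
    ptensor a b ⟶ ptensor a' b' where
  σ := (finSumFinEquiv.symm.trans (f.σ.sumCongr g.σ)).trans finSumFinEquiv
  comm := by
    funext x
    dsimp only [ptensor] at x ⊢
    simp only [Equiv.trans_apply, Function.comp_apply]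
    refine Fin.addCases (fun i => ?_) (fun j => ?_) x
    · show Fin.append a.2 b.2 (finSumFinEquiv ((f.σ.sumCongr g.σ) (finSumFinEquiv.symm (Fin.castAdd b'.1 i)))) = _
      rw [finSumFinEquiv_symm_apply_castAdd]
      simp [Fin.append_left]
      exact congrFun f.comm i
    · show Fin.append a.2 b.2 (finSumFinEquiv ((f.σ.sumCongr g.σ) (finSumFinEquiv.symm (Fin.natAdd a'.1 j)))) = _
      rw [finSumFinEquiv_symm_apply_natAdd]
      simp [Fin.append_right]
      exact congrFun g.comm j

/-- The empty profile (the tensor unit of `Σ_𝔠`). -/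
def punit (S : Type w) : Profile S := ⟨0, Fin.elim0⟩

/-- The order-reversal endofunctor `Rev` of `Σ_𝔠`. -/
def RevF (S : Type w) : Profile S ⥤ Profile S where
  obj a := ⟨a.1, a.2 ∘ Fin.rev⟩
  map {a b} f :=
    ⟨(Fin.revPerm.trans f.σ).trans Fin.revPerm, by
      funext x
      simp only [Function.comp_apply, Equiv.trans_apply, Fin.revPerm_apply, Fin.rev_rev]
      exact congrFun f.comm (Fin.revPerm x)⟩
  map_id a := ProfileHom.ext (Equiv.ext fun x => by simp [Fin.rev_rev]; rfl)
  map_comp f g := ProfileHom.ext (Equiv.ext fun x => by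
    show (f.σ (g.σ x.rev)).rev = Fin.rev (f.σ (Fin.rev (Fin.rev (g.σ (Fin.rev x)))))
    rw [Fin.rev_rev])

/-- The monoidal structure `Rev₂` on the order-reversal functor: the block transposition
`Rev(c) ⊗ Rev(d) ⟶ Rev(c ⊗ d)`. -/
def Rev2 {S : Type w} (a b : Profile S) :
    ptensor ((RevF S).obj a) ((RevF S).obj b) ⟶ (RevF S).obj (ptensor a b) where
  σ := (finCongr (Nat.add_comm a.1 b.1)).trans
    ((finSumFinEquiv.symm.trans ((Equiv.sumComm (Fin b.1) (Fin a.1)).trans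
      finSumFinEquiv)))
  comm := by
    funext x
    dsimp only [ptensor, RevF] at x ⊢
    show Fin.append (a.2 ∘ Fin.rev) (b.2 ∘ Fin.rev) (finSumFinEquiv ((Equiv.sumComm (Fin b.1) (Fin a.1)) (finSumFinEquiv.symm (Fin.cast (Nat.add_comm a.1 b.1) x)))) = (Fin.append a.2 b.2) x.rev
    rcases h : finSumFinEquiv.symm (Fin.cast (Nat.add_comm a.1 b.1) x) with i | j
    · have h2 : Fin.cast (Nat.add_comm a.1 b.1) x = Fin.castAdd a.1 i := by
        simpa using congrArg finSumFinEquiv h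
      have hv : (x : ℕ) = (i : ℕ) := congrArg Fin.val h2
      have hx : x.rev = Fin.natAdd a.1 i.rev := by
        apply Fin.ext
        simp [Fin.rev, hv]
        omega
      simp only [Equiv.sumComm_apply, Sum.swap_inl, finSumFinEquiv_apply_right, hx,
        Fin.append_right, Function.comp_apply]
    · have h2 : Fin.cast (Nat.add_comm a.1 b.1) x = Fin.natAdd b.1 j := by
        simpa using congrArg finSumFinEquiv h
      have hv : (x : ℕ) = b.1 + (j : ℕ) := congrArg Fin.val h2
      have hx : x.rev = Fin.castAdd b.1 j.rev := by
        apply Fin.ext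
        have := j.isLt
        simp [Fin.rev, hv]
        omega
      simp only [Equiv.sumComm_apply, Sum.swap_inr, finSumFinEquiv_apply_left, hx,
        Fin.append_left, Function.comp_apply]

/-- The canonical ∗-object structure (the section `ρ`) on a profile, given by the
order-reversal permutation `ρₙ : c ⟶ cρₙ`. -/
def rhoSection {S : Type w} (a : Profile S) : a ⟶ (RevF S).obj a :=
  ⟨Fin.revPerm, rfl⟩

/-- The identification `𝟭 ≅ Rev ⋙ Rev` (the involutive structure `j = id` of the paper,
which in this encoding is the canonical natural isomorphism). -/
def revrev (S : Type w) : 𝟭 (Profile S) ≅ RevF S ⋙ RevF S :=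
  NatIso.ofComponents
    (fun a => by
      refine ⟨⟨Equiv.refl _, ?_⟩, ⟨Equiv.refl _, ?_⟩, ?_, ?_⟩
      · funext x; exact congrArg a.2 (Fin.rev_rev x).symm
      · funext x; exact congrArg a.2 (Fin.rev_rev x)
      · exact ProfileHom.ext rfl
      · exact ProfileHom.ext rfl)
    (fun f => ProfileHom.ext (Equiv.ext fun x => by
      show f.σ x = Fin.rev (Fin.rev (f.σ (Fin.rev (Fin.rev x))))
      exact ((Fin.rev_rev _).trans (congrArg f.σ (Fin.rev_rev x))).symm))

/-- The involutive symmetric monoidal category `(Σ_𝔠, Rev, id)` of `𝔠`-profiles with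
order-reversal is isomorphic to the trivial involutive symmetric monoidal category
`(Σ_𝔠, Id, id)`: the order-reversal permutations `ρₙ : c ⟶ cρₙ` (the monoidal section `ρ`
of the forgetful functor) assemble into a monoidal natural isomorphism `α : 𝟭 ≅ Rev`
compatible with the involutive structures, i.e. `(𝟭, α)` is an invertible involutive
symmetric monoidal functor. -/
theorem profile_rev_trivialization (S : Type w) :
    ∃ α : 𝟭 (Profile S) ≅ RevF S,
      -- the components of `α` are the order-reversal permutations (the section `ρ`):
      (∀ a : Profile S, α.hom.app a = rhoSection a) ∧
      -- `(𝟭, α)` is an involutive functor from the trivial involutive structure: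
      (∀ a : Profile S,
        α.hom.app a ≫ (RevF S).map (α.hom.app a) = (revrev S).hom.app a) ∧
      -- `α` is compatible with the (symmetric) monoidal structures `Rev₂` ...
      (∀ a b : Profile S,
        ptensorHom (α.hom.app a) (α.hom.app b) ≫ Rev2 a b = α.hom.app (ptensor a b)) ∧
      -- ... and `Rev₀ = id`:
      ((α.hom.app (punit S)).σ = Equiv.refl _) := by
  refine ⟨NatIso.ofComponents
    (fun a => ⟨rhoSection a, ⟨Fin.revPerm, by funext x; exact congrArg a.2 (Fin.rev_rev x)⟩,
      ProfileHom.ext (Equiv.ext fun x => Fin.rev_rev x),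
      ProfileHom.ext (Equiv.ext fun x => Fin.rev_rev x)⟩)
    (fun f => ProfileHom.ext (Equiv.ext fun x => by
      show f.σ (Fin.rev x) = Fin.rev (Fin.rev (f.σ (Fin.rev x)))
      rw [Fin.rev_rev])),
    fun a => rfl, fun a => ?_, fun a b => ?_, ?_⟩
  · exact ProfileHom.ext (Equiv.ext fun x => by
      show Fin.rev (Fin.rev (Fin.rev (Fin.rev x))) = x
      simp [Fin.rev_rev])
  · refine ProfileHom.ext (Equiv.ext fun x => Fin.ext ?_)
    show ((finSumFinEquiv ((Fin.revPerm.sumCongr Fin.revPerm) (finSumFinEquiv.symm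
      (finSumFinEquiv ((Equiv.sumComm (Fin b.1) (Fin a.1))
        (finSumFinEquiv.symm (Fin.cast (Nat.add_comm a.1 b.1) x))))))) : ℕ) = (Fin.rev (x : Fin (a.1 + b.1)) : ℕ)
    rcases h : finSumFinEquiv.symm (Fin.cast (Nat.add_comm a.1 b.1) x) with i | j
    · have h2 : Fin.cast (Nat.add_comm a.1 b.1) x = Fin.castAdd a.1 i := by
        simpa using congrArg finSumFinEquiv h
      have hv : (x : ℕ) = (i : ℕ) := congrArg Fin.val h2
      have := i.isLt
      simp [h, Fin.rev, hv, Fin.coe_castAdd, Fin.coe_natAdd]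
      have he : ((RevF S).obj (ptensor a b)).1 = a.1 + b.1 := rfl
      omega
    · have h2 : Fin.cast (Nat.add_comm a.1 b.1) x = Fin.natAdd b.1 j := by
        simpa using congrArg finSumFinEquiv h
      have hv : (x : ℕ) = b.1 + (j : ℕ) := congrArg Fin.val h2
      have := j.isLt
      have := x.isLt
      simp [h, Fin.rev, hv, Fin.coe_castAdd, Fin.coe_natAdd]
      have he : ((RevF S).obj (ptensor a b)).1 = a.1 + b.1 := rfl
      omega
  · ext x
    exact x.elim0
end

section
/- Let (M, J, j) be an involutive symmetric monoidal category, (A, μ, η, ∗) an order-reversing ∗-monoid (i.e., ∗ ∘ μ = J(μ^op) ∘ J₂ ∘ (∗ ⊗ ∗), where μ^op = μ ∘ τ, plus the unit compatibility ∗ ∘ η = J(η) ∘ J₀ and the ∗-object condition J(∗) ∘ ∗ = j_A), and ω : A → I a state, i.e., a morphism of ∗-objects from (∗ : A → JA) to (J₀ : I → JI). Then the composite ⟨·,·⟩ = ω ∘ μ ∘ (∗⁻¹ ⊗ id) : JA ⊗ A → I defines an inner product on A, and the multiplication μ : A ⊗ A → A defines a ∗-representation of A on the inner product space (A, ⟨·,·⟩).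 -/
open CategoryTheory CategoryTheory.Limits MonoidalCategory

universe w w2 v u v2 u2

/-- An involutive monoidal category (in the sense of Jacobs): a monoidal category `C`,
a lax monoidal endofunctor `J = (J, μJ, εJ)` and a monoidal natural isomorphism
`j : 𝟭 C ≅ J ⋙ J` satisfying `jJ = Jj`. -/
structure InvMonCat (C : Type u) [Category.{v} C] [MonoidalCategory C] where
  /-- the involution endofunctor -/
  J : C ⥤ C
  /-- the unit structure morphism `J₀ : I ⟶ JI` -/
  εJ : 𝟙_ C ⟶ J.obj (𝟙_ C)
  /-- the tensorator `J₂` -/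
  μJ : ∀ X Y : C, J.obj X ⊗ J.obj Y ⟶ J.obj (X ⊗ Y)
  μJ_natural : ∀ {X Y X' Y' : C} (f : X ⟶ Y) (g : X' ⟶ Y'),
    (J.map f ⊗ₘ J.map g) ≫ μJ Y Y' = μJ X X' ≫ J.map (f ⊗ₘ g)
  associativity : ∀ X Y Z : C,
    (μJ X Y ⊗ₘ 𝟙 (J.obj Z)) ≫ μJ (X ⊗ Y) Z ≫ J.map (α_ X Y Z).hom =
      (α_ (J.obj X) (J.obj Y) (J.obj Z)).hom ≫ (𝟙 (J.obj X) ⊗ₘ μJ Y Z) ≫ μJ X (Y ⊗ Z)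
  left_unitality : ∀ X : C,
    (λ_ (J.obj X)).hom = (εJ ⊗ₘ 𝟙 (J.obj X)) ≫ μJ (𝟙_ C) X ≫ J.map (λ_ X).hom
  right_unitality : ∀ X : C,
    (ρ_ (J.obj X)).hom = (𝟙 (J.obj X) ⊗ₘ εJ) ≫ μJ X (𝟙_ C) ≫ J.map (ρ_ X).hom
  /-- the natural isomorphism `j : 𝟭 C ≅ J²` -/
  j : 𝟭 C ≅ J ⋙ J
  coh : ∀ c : C, j.hom.app (J.obj c) = J.map (j.hom.app c)
  /-- `j` is a monoidal natural transformation (tensor part) -/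
  j_tensor : ∀ X Y : C,
    (j.hom.app X ⊗ₘ j.hom.app Y) ≫ μJ (J.obj X) (J.obj Y) ≫ J.map (μJ X Y) =
      j.hom.app (X ⊗ Y)
  /-- `j` is a monoidal natural transformation (unit part) -/
  j_unit : εJ ≫ J.map εJ = j.hom.app (𝟙_ C)

/-- GNS construction.  Let `(M, J, j)` be an involutive symmetric monoidal category,
`(A, μ, η, ∗)` an order-reversing ∗-monoid and `ω : A ⟶ I` a state.  Then
`⟨·,·⟩ := ω ∘ μ ∘ (∗⁻¹ ⊗ id) : JA ⊗ A ⟶ I` is an inner product on `A` and the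
multiplication `μ` defines a ∗-representation of `A` on `(A, ⟨·,·⟩)`. -/
theorem gns_construction {C : Type u} [Category.{v} C] [MonoidalCategory C]
    [SymmetricCategory C] (I : InvMonCat C)
    -- `J` is a symmetric monoidal functor:
    (hbraid : ∀ X Y : C,
      I.μJ X Y ≫ I.J.map (β_ X Y).hom = (β_ (I.J.obj X) (I.J.obj Y)).hom ≫ I.μJ Y X)
    (A : C) (mul : A ⊗ A ⟶ A) (one : 𝟙_ C ⟶ A)
    -- `(A, μ, η)` is a monoid:
    (h_assoc : (mul ⊗ₘ 𝟙 A) ≫ mul = (α_ A A A).hom ≫ (𝟙 A ⊗ₘ mul) ≫ mul)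
    (h_lu : (one ⊗ₘ 𝟙 A) ≫ mul = (λ_ A).hom)
    (h_ru : (𝟙 A ⊗ₘ one) ≫ mul = (ρ_ A).hom)
    -- `∗` is a ∗-object structure (hence invertible; `hstar_iso` is redundant but lets
    -- us form `inv star`):
    (star : A ⟶ I.J.obj A) (h_star : star ≫ I.J.map star = I.j.hom.app A)
    (hstar_iso : IsIso star)
    -- the ∗-monoid is order-reversing:  `∗ ∘ η = J(η) ∘ J₀` and
    -- `∗ ∘ μ = J(μ^op) ∘ J₂ ∘ (∗ ⊗ ∗)` with `μ^op = μ ∘ τ`: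
    (h_one : one ≫ star = I.εJ ≫ I.J.map one)
    (h_mul : mul ≫ star = (star ⊗ₘ star) ≫ I.μJ A A ≫ I.J.map ((β_ A A).hom ≫ mul))
    -- a state `ω : A ⟶ I`, i.e. a ∗-morphism `(∗ : A ⟶ JA) ⟶ (J₀ : I ⟶ JI)`:
    (ω : A ⟶ 𝟙_ C) (h_ω : star ≫ I.J.map ω = ω ≫ I.εJ) :
    -- the GNS inner product:
    letI := hstar_iso
    let ip : I.J.obj A ⊗ A ⟶ 𝟙_ C := (inv star ⊗ₘ 𝟙 A) ≫ mul ≫ ω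
    -- the canonical ∗-object structure on `JA ⊗ A`:
    let sV : I.J.obj A ⊗ A ⟶ I.J.obj (I.J.obj A ⊗ A) :=
      (β_ (I.J.obj A) A).hom ≫ (I.j.hom.app A ⊗ₘ 𝟙 (I.J.obj A)) ≫ I.μJ (I.J.obj A) A
    -- (1) `sV` is indeed a ∗-object structure:
    (sV ≫ I.J.map sV = I.j.hom.app (I.J.obj A ⊗ A)) ∧
    -- (2) `ip` is an inner product, i.e. a ∗-morphism `(JA ⊗ A, sV) ⟶ (I, J₀)`:
    (sV ≫ I.J.map ip = ip ≫ I.εJ) ∧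
    -- (3) `ℓ = μ` is a left module structure on `A` (the monoid axioms) ...
    ((one ⊗ₘ 𝟙 A) ≫ mul = (λ_ A).hom) ∧
    ((mul ⊗ₘ 𝟙 A) ≫ mul = (α_ A A A).hom ≫ (𝟙 A ⊗ₘ mul) ≫ mul) ∧
    -- (4) ... which is compatible with the inner product, i.e. a ∗-representation:
    ((α_ (I.J.obj A) A A).hom ≫ (𝟙 (I.J.obj A) ⊗ₘ mul) ≫ ip =
      ((β_ (I.J.obj A) A).hom ⊗ₘ 𝟙 A) ≫ ((star ⊗ₘ 𝟙 (I.J.obj A)) ⊗ₘ 𝟙 A) ≫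
        (I.μJ A A ⊗ₘ 𝟙 A) ≫ (I.J.map mul ⊗ₘ 𝟙 A) ≫ ip) := by

  intro ip sV
  haveI := hstar_iso
  have h1 : I.j.hom.app A ≫ inv (I.J.map star) = star := by
    rw [IsIso.comp_inv_eq]; exact h_star.symm
  have hkey : (star ⊗ₘ star) ≫ I.μJ A A ≫ I.J.map mul = (β_ A A).hom ≫ mul ≫ star := by
    have e1 : mul ≫ star =
        (β_ A A).hom ≫ (star ⊗ₘ star) ≫ I.μJ A A ≫ I.J.map mul := by
      rw [h_mul, Functor.map_comp, reassoc_of% (hbraid A A),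
        ← BraidedCategory.braiding_naturality_assoc]
    rw [← cancel_epi (β_ A A).hom, ← e1]
    simp [SymmetricCategory.symmetry_assoc]
  have hg : (β_ (I.J.obj A) A).hom ≫ (star ⊗ₘ 𝟙 (I.J.obj A)) ≫ I.μJ A A ≫ I.J.map mul
      = (inv star ⊗ₘ 𝟙 A) ≫ mul ≫ star := by
    have hsplit : (star ⊗ₘ 𝟙 (I.J.obj A)) = (𝟙 A ⊗ₘ inv star) ≫ (star ⊗ₘ star) := by
      rw [tensorHom_comp_tensorHom]; simp
    rw [hsplit]
    simp only [Category.assoc]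
    rw [hkey, BraidedCategory.braiding_naturality_assoc,
      SymmetricCategory.symmetry_assoc]
  have hg2 : (β_ (I.J.obj A) A).hom ≫ (star ⊗ₘ 𝟙 (I.J.obj A)) ≫ I.μJ A A ≫
      I.J.map mul ≫ inv star = (inv star ⊗ₘ 𝟙 A) ≫ mul := by
    rw [reassoc_of% hg]; simp
  refine ⟨?_, ?_, h_lu, h_assoc, ?_⟩
  · -- (1)
    simp only [sV, Functor.map_comp, Category.assoc]
    rw [reassoc_of% (hbraid (I.J.obj A) A),
      ← reassoc_of% (I.μJ_natural (I.j.hom.app A) (𝟙 (I.J.obj A)))]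
    simp only [CategoryTheory.Functor.map_id]
    have hnat : (I.j.hom.app A ⊗ₘ 𝟙 (I.J.obj A)) ≫
        (β_ (I.J.obj (I.J.obj A)) (I.J.obj A)).hom =
        (β_ A (I.J.obj A)).hom ≫ (𝟙 (I.J.obj A) ⊗ₘ I.j.hom.app A) := by
      exact BraidedCategory.braiding_naturality (I.j.hom.app A) (𝟙 (I.J.obj A))
    rw [reassoc_of% hnat, SymmetricCategory.symmetry_assoc]
    have hcomb : (𝟙 (I.J.obj A) ⊗ₘ I.j.hom.app A) ≫
        (I.J.map (I.j.hom.app A) ⊗ₘ 𝟙 (I.J.obj (I.J.obj A))) =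
        I.J.map (I.j.hom.app A) ⊗ₘ I.j.hom.app A := by
      exact id_tensor_comp_tensor_id (I.j.hom.app A) (I.J.map (I.j.hom.app A))
    rw [reassoc_of% hcomb, ← I.coh A]
    exact I.j_tensor (I.J.obj A) A
  · -- (2)
    simp only [ip, sV, Functor.map_comp, Category.assoc]
    rw [← reassoc_of% (I.μJ_natural (inv star) (𝟙 A))]
    simp only [CategoryTheory.Functor.map_id, Functor.map_inv]
    have hcomb : (I.j.hom.app A ⊗ₘ 𝟙 (I.J.obj A)) ≫
        (inv (I.J.map star) ⊗ₘ 𝟙 (I.J.obj A)) = (star ⊗ₘ 𝟙 (I.J.obj A)) := by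
      rw [tensorHom_comp_tensorHom, h1]; simp
    rw [reassoc_of% hcomb, reassoc_of% hg, h_ω]
  · -- (4)
    simp only [ip]
    have e : (𝟙 (I.J.obj A) ⊗ₘ mul) ≫ (inv star ⊗ₘ 𝟙 A) =
        (inv star ⊗ₘ (𝟙 A ⊗ₘ 𝟙 A)) ≫ (𝟙 A ⊗ₘ mul) := by
      rw [tensorHom_comp_tensorHom, tensorHom_comp_tensorHom]; simp
    rw [reassoc_of% e, ← associator_naturality_assoc, ← reassoc_of% h_assoc]
    simp only [tensorHom_comp_tensorHom_assoc, Category.id_comp, Category.comp_id]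
    rw [hg2]
end
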